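/- Let N be an even positive integer and let A be an N×N integer matrix which is an alternating-sign matrix (all partial sums of each row and each column, taken from the start, lie in {0,1}, and each full row sum and column sum equals 1) and which is invariant under rotation by 90 degrees, i.e. A(i,j) = A(j, N−1−i) for all 0 ≤ i,j ≤ N−1. Then N is divisible by 4. -/

import Mathlib

/-- `A` is an alternating-sign matrix: every partial sum (from the start) of each
row and each column lies in `{0, 1}`, and each full row sum and column sum equals `1`. -/
def IsASM {N : ℕ} (A : Matrix (Fin N) (Fin N) ℤ) : Prop :=
  (∀ i k : Fin N, (∑ j ∈ Finset.univ.filter (· ≤ k), A i j) ∈ ({0, 1} : Set ℤ)) ∧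
  (∀ j k : Fin N, (∑ i ∈ Finset.univ.filter (· ≤ k), A i j) ∈ ({0, 1} : Set ℤ)) ∧
  (∀ i : Fin N, ∑ j, A i j = 1) ∧
  (∀ j : Fin N, ∑ i, A i j = 1)

/-- If an `N × N` alternating-sign matrix (`N` even and positive) is invariant under
rotation by 90 degrees, then `N` is divisible by 4. -/
theorem qt_invariant_asm_size_dvd_four (N : ℕ) (hN : 0 < N) (hEven : Even N)
    (A : Matrix (Fin N) (Fin N) ℤ) (hASM : IsASM A)
    (hQT : ∀ i j : Fin N, A i j = A j i.rev) :
    4 ∣ N := by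
  obtain ⟨M, hM⟩ := hEven
  set f : Fin N × Fin N → ℤ := fun p => A p.1 p.2 with hf
  have hfr : ∀ p : Fin N × Fin N, f p = f (p.2, p.1.rev) := fun p => hQT p.1 p.2
  have hrev : ∀ i : Fin N, (Fin.rev i).val = N - (i.val + 1) := fun i => Fin.val_rev i
  -- total sum equals N
  have htot : ∑ p : Fin N × Fin N, f p = (N : ℤ) := by
    rw [Fintype.sum_prod_type]
    simp only [hf]
    rw [Finset.sum_congr rfl (fun i _ => hASM.2.2.1 i)]
    simp
  -- quadrant sums
  classical
  let Q00 := Finset.univ.filter (fun p : Fin N × Fin N => p.1.val < M ∧ p.2.val < M)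
  let Q01 := Finset.univ.filter (fun p : Fin N × Fin N => p.1.val < M ∧ ¬ p.2.val < M)
  let Q11 := Finset.univ.filter (fun p : Fin N × Fin N => ¬ p.1.val < M ∧ ¬ p.2.val < M)
  let Q10 := Finset.univ.filter (fun p : Fin N × Fin N => ¬ p.1.val < M ∧ p.2.val < M)
  have hsplit : ∑ p : Fin N × Fin N, f p
      = ∑ p ∈ Q00, f p + ∑ p ∈ Q01, f p + (∑ p ∈ Q10, f p + ∑ p ∈ Q11, f p) := by
    rw [← Finset.sum_filter_add_sum_filter_not Finset.univ
      (fun p : Fin N × Fin N => p.1.val < M) f]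
    congr 1
    · rw [← Finset.sum_filter_add_sum_filter_not
        (Finset.univ.filter (fun p : Fin N × Fin N => p.1.val < M))
        (fun p : Fin N × Fin N => p.2.val < M) f]
      simp only [Finset.filter_filter, Q00, Q01]
    · rw [← Finset.sum_filter_add_sum_filter_not
        (Finset.univ.filter (fun p : Fin N × Fin N => ¬ p.1.val < M))
        (fun p : Fin N × Fin N => p.2.val < M) f]
      simp only [Finset.filter_filter, Q10, Q11]
  -- bijection lemma : sums over successive quadrants equal
  have key : ∀ (P Q : Fin N × Fin N → Prop) [DecidablePred P] [DecidablePred Q],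
      (∀ p : Fin N × Fin N, P p ↔ Q (p.2, p.1.rev)) →
      ∑ p ∈ Finset.univ.filter P, f p = ∑ p ∈ Finset.univ.filter Q, f p := by
    intro P Q _ _ hPQ
    refine Finset.sum_nbij' (fun p => (p.2, p.1.rev)) (fun p => (p.2.rev, p.1)) ?_ ?_ ?_ ?_ ?_
    · intro p hp
      simp only [Finset.mem_filter, Finset.mem_univ, true_and] at hp ⊢
      exact (hPQ p).1 hp
    · intro p hp
      simp only [Finset.mem_filter, Finset.mem_univ, true_and] at hp ⊢
      have := (hPQ (p.2.rev, p.1)).2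
      simp only [Fin.rev_rev] at this
      exact this hp
    · intro p _; simp [Fin.rev_rev]
    · intro p _; simp [Fin.rev_rev]
    · intro p _; exact hfr p
  have hMlt : ∀ i : Fin N, i.val < M ↔ ¬ (Fin.rev i).val < M := by
    intro i
    have h1 := hrev i
    have h2 := i.isLt
    omega
  have e1 : ∑ p ∈ Q00, f p = ∑ p ∈ Q01, f p := by
    apply key; intro p; have h := hMlt p.1; simp only [Prod.fst, Prod.snd]; tauto
  have e2 : ∑ p ∈ Q01, f p = ∑ p ∈ Q11, f p := by
    apply key; intro p; have h := hMlt p.1; simp only [Prod.fst, Prod.snd]; tauto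
  have e3 : ∑ p ∈ Q11, f p = ∑ p ∈ Q10, f p := by
    apply key; intro p; have h := hMlt p.1; simp only [Prod.fst, Prod.snd]; tauto
  have hfour : (N : ℤ) = 4 * ∑ p ∈ Q00, f p := by
    rw [← htot, hsplit, ← e1, ← e2 , ← e1, ← e3, ← e2, ← e1]
    ring
  have : (4 : ℤ) ∣ (N : ℤ) := ⟨∑ p ∈ Q00, f p, hfour⟩
  exact_mod_cast this
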